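/- Under the hypotheses of the saddle-point construction (E X = 0, E X² = 1, E e^{α|X|} ≤ 2), the map z ↦ K'(z) satisfies |K'(z₂) − K'(z₁)| ≥ |z₂ − z₁|/2 for all z₁, z₂ in the disc |z| ≤ α³/16, and in particular |K'(z)| ≥ |z|/2 there. -/

import Mathlib

open MeasureTheory ProbabilityTheory

section Aux

lemma sp14_norm_exp_le (x : ℂ) {c : ℝ} (hx : ‖x‖ ≤ c) : ‖Complex.exp x‖ ≤ Real.exp c := by
  rw [Complex.norm_exp]
  exact Real.exp_le_exp.2 (((le_abs_self x.re).trans x.abs_re_le_norm).trans hx)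

lemma sp14_exp_taylor1 (w : ℂ) : ‖Complex.exp w - 1‖ ≤ ‖w‖ * Real.exp ‖w‖ := by
  have h := Convex.norm_image_sub_le_of_norm_hasDerivWithin_le
    (f := Complex.exp) (f' := Complex.exp) (s := Metric.closedBall (0:ℂ) ‖w‖)
    (C := Real.exp ‖w‖)
    (fun x _ => (Complex.hasDerivAt_exp x).hasDerivWithinAt)
    (fun x hx => sp14_norm_exp_le x (by simpa using hx))
    (convex_closedBall _ _) (Metric.mem_closedBall_self (norm_nonneg w))
    (by simp : w ∈ _)
  simpa [Complex.exp_zero, mul_comm] using h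

lemma sp14_exp_taylor2 (w : ℂ) : ‖Complex.exp w - 1 - w‖ ≤ ‖w‖ ^ 2 * Real.exp ‖w‖ := by
  have h := Convex.norm_image_sub_le_of_norm_hasDerivWithin_le
    (f := fun z => Complex.exp z - 1 - z) (f' := fun z => Complex.exp z - 1)
    (s := Metric.closedBall (0:ℂ) ‖w‖) (C := ‖w‖ * Real.exp ‖w‖)
    (fun x _ => (((Complex.hasDerivAt_exp x).sub_const 1).sub (hasDerivAt_id x)).hasDerivWithinAt)
    (fun x hx => by
      have hxw : ‖x‖ ≤ ‖w‖ := by simpa using hx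
      calc ‖Complex.exp x - 1‖ ≤ ‖x‖ * Real.exp ‖x‖ := sp14_exp_taylor1 x
        _ ≤ ‖w‖ * Real.exp ‖w‖ := by gcongr)
    (convex_closedBall _ _) (Metric.mem_closedBall_self (norm_nonneg w))
    (by simp : w ∈ _)
  have h2 : ‖Complex.exp w - 1 - w - (Complex.exp 0 - 1 - 0)‖ ≤ ‖w‖ * Real.exp ‖w‖ * ‖w - 0‖ := h
  simp only [Complex.exp_zero, sub_self, sub_zero, zero_sub, sub_neg_eq_add, sub_zero] at h2
  calc ‖Complex.exp w - 1 - w‖ ≤ ‖w‖ * Real.exp ‖w‖ * ‖w‖ := by simpa using h2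
    _ = ‖w‖ ^ 2 * Real.exp ‖w‖ := by ring

lemma sp14_sq_le_exp (s : ℝ) (hs : 0 ≤ s) : s^2 * Real.exp 2 ≤ Real.exp (2*s) := by
  have h : s ≤ Real.exp (s-1) := by
    have := Real.add_one_le_exp (s-1); linarith
  have h2 : s^2 ≤ Real.exp (s-1)^2 := pow_le_pow_left₀ hs h 2
  have h3 : Real.exp (s-1)^2 * Real.exp 2 = Real.exp (2*s) := by
    rw [sq, ← Real.exp_add, ← Real.exp_add]; ring_nf
  nlinarith [Real.exp_pos 2]

lemma sp14_cube_le_exp (s : ℝ) (hs : 0 ≤ s) : s^3 * Real.exp 3 ≤ Real.exp (3*s) := by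
  have h : s ≤ Real.exp (s-1) := by
    have := Real.add_one_le_exp (s-1); linarith
  have h2 : s^3 ≤ Real.exp (s-1)^3 := pow_le_pow_left₀ hs h 3
  have h3 : Real.exp (s-1)^3 * Real.exp 3 = Real.exp (3*s) := by
    rw [pow_succ, sq, ← Real.exp_add, ← Real.exp_add, ← Real.exp_add]; ring_nf
  nlinarith [Real.exp_pos 3]

lemma sp14_exp_two_ge : (361:ℝ)/49 ≤ Real.exp 2 := by
  have h : (19:ℝ)/7 ≤ Real.exp 1 := by
    have := Real.exp_one_gt_d9; norm_num at this ⊢; linarith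
  have h2 : Real.exp 2 = Real.exp 1 * Real.exp 1 := by rw [← Real.exp_add]; norm_num
  nlinarith [Real.exp_pos 1]

lemma sp14_exp_three_ge : (6859:ℝ)/343 ≤ Real.exp 3 := by
  have h : (19:ℝ)/7 ≤ Real.exp 1 := by
    have := Real.exp_one_gt_d9; norm_num at this ⊢; linarith
  have h2 : Real.exp 3 = Real.exp 1 * Real.exp 1 * Real.exp 1 := by
    rw [← Real.exp_add, ← Real.exp_add]; norm_num
  nlinarith [Real.exp_pos 1]

/-- `t² e^{αt/8} ≤ (256/361)/α² e^{αt}` -/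
lemma sp14_mom2 (α t : ℝ) (hα : 0 < α) (ht : 0 ≤ t) :
    t^2 * Real.exp (α*t/8) ≤ 256/(361*α^2) * Real.exp (α*t) := by
  set s := 7*α*t/16 with hs_def
  have hs : (0:ℝ) ≤ s := by positivity
  have h1 := sp14_sq_le_exp s hs
  have h2 := sp14_exp_two_ge
  have h4 : s^2 ≤ 49/361 * Real.exp (2*s) := by
    nlinarith [Real.exp_pos (2*s), sq_nonneg s,
      mul_le_mul_of_nonneg_left h2 (sq_nonneg s)]
  have h3 : Real.exp (2*s) * Real.exp (α*t/8) = Real.exp (α*t) := by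
    rw [← Real.exp_add]; congr 1; rw [hs_def]; ring
  have h5 : s^2 * Real.exp (α*t/8) ≤ 49/361 * Real.exp (α*t) := by
    calc s^2 * Real.exp (α*t/8) ≤ (49/361 * Real.exp (2*s)) * Real.exp (α*t/8) := by gcongr
      _ = 49/361 * Real.exp (α*t) := by rw [mul_assoc, h3]
  have ht2 : t^2 = 256/(49*α^2) * s^2 := by
    rw [hs_def]; field_simp; ring
  rw [ht2]
  calc 256/(49*α^2) * s^2 * Real.exp (α*t/8)
      = 256/(49*α^2) * (s^2 * Real.exp (α*t/8)) := by ring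
    _ ≤ 256/(49*α^2) * (49/361 * Real.exp (α*t)) := by gcongr
    _ = 256/(361*α^2) * Real.exp (α*t) := by field_simp

/-- `t³ e^{αt/8} ≤ (13824/6859)/α³ e^{αt}` -/
lemma sp14_mom3 (α t : ℝ) (hα : 0 < α) (ht : 0 ≤ t) :
    t^3 * Real.exp (α*t/8) ≤ 13824/(6859*α^3) * Real.exp (α*t) := by
  set s := 7*α*t/24 with hs_def
  have hs : (0:ℝ) ≤ s := by positivity
  have h1 := sp14_cube_le_exp s hs
  have h2 := sp14_exp_three_ge
  have h4 : s^3 ≤ 343/6859 * Real.exp (3*s) := by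
    nlinarith [Real.exp_pos (3*s), pow_nonneg hs 3,
      mul_le_mul_of_nonneg_left h2 (pow_nonneg hs 3)]
  have h3 : Real.exp (3*s) * Real.exp (α*t/8) = Real.exp (α*t) := by
    rw [← Real.exp_add]; congr 1; rw [hs_def]; ring
  have h5 : s^3 * Real.exp (α*t/8) ≤ 343/6859 * Real.exp (α*t) := by
    calc s^3 * Real.exp (α*t/8) ≤ (343/6859 * Real.exp (3*s)) * Real.exp (α*t/8) := by gcongr
      _ = 343/6859 * Real.exp (α*t) := by rw [mul_assoc, h3]
  have ht3 : t^3 = 13824/(343*α^3) * s^3 := by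
    rw [hs_def]; field_simp; ring
  rw [ht3]
  calc 13824/(343*α^3) * s^3 * Real.exp (α*t/8)
      = 13824/(343*α^3) * (s^3 * Real.exp (α*t/8)) := by ring
    _ ≤ 13824/(343*α^3) * (343/6859 * Real.exp (α*t)) := by gcongr
    _ = 13824/(6859*α^3) * Real.exp (α*t) := by field_simp

/-- crude: `t e^{αt/2} ≤ (2/α) e^{αt}` -/
lemma sp14_mom1c (α t : ℝ) (hα : 0 < α) (ht : 0 ≤ t) :
    t * Real.exp (α*t/2) ≤ 2/α * Real.exp (α*t) := by
  have h : α*t/2 ≤ Real.exp (α*t/2) := by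
    have := Real.add_one_le_exp (α*t/2); linarith
  have h2 : t ≤ 2/α * Real.exp (α*t/2) := by
    rw [div_mul_eq_mul_div, le_div_iff₀ hα]; nlinarith
  have h3 : Real.exp (α*t/2) * Real.exp (α*t/2) = Real.exp (α*t) := by
    rw [← Real.exp_add]; ring_nf
  calc t * Real.exp (α*t/2) ≤ (2/α * Real.exp (α*t/2)) * Real.exp (α*t/2) := by gcongr
    _ = 2/α * Real.exp (α*t) := by rw [mul_assoc, h3]

/-- crude: `t² e^{αt/2} ≤ (16/α²) e^{αt}` -/
lemma sp14_mom2c (α t : ℝ) (hα : 0 < α) (ht : 0 ≤ t) :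
    t^2 * Real.exp (α*t/2) ≤ 16/α^2 * Real.exp (α*t) := by
  have h : α*t/4 ≤ Real.exp (α*t/4) := by
    have := Real.add_one_le_exp (α*t/4); linarith
  have h2 : t ≤ 4/α * Real.exp (α*t/4) := by
    rw [div_mul_eq_mul_div, le_div_iff₀ hα]; nlinarith
  have h4 : t^2 ≤ 16/α^2 * Real.exp (α*t/2) := by
    have := mul_le_mul h2 h2 ht (by positivity)
    calc t^2 = t*t := sq t
      _ ≤ (4/α * Real.exp (α*t/4)) * (4/α * Real.exp (α*t/4)) := this
      _ = 16/α^2 * (Real.exp (α*t/4) * Real.exp (α*t/4)) := by ring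
      _ = 16/α^2 * Real.exp (α*t/2) := by rw [← Real.exp_add]; ring_nf
  have h3 : Real.exp (α*t/2) * Real.exp (α*t/2) = Real.exp (α*t) := by
    rw [← Real.exp_add]; ring_nf
  calc t^2 * Real.exp (α*t/2) ≤ (16/α^2 * Real.exp (α*t/2)) * Real.exp (α*t/2) := by gcongr
    _ = 16/α^2 * Real.exp (α*t) := by rw [mul_assoc, h3]

end Aux

set_option maxHeartbeats 1000000 in
/-- If `E X = 0`, `E X² = 1`, `E e^{α|X|} ≤ 2`, and `K(z) = log E e^{zX}`, then the map
`z ↦ K'(z)` satisfies `|K'(z₂) − K'(z₁)| ≥ |z₂ − z₁|/2` on the disc `|z| ≤ α³/16`,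
and in particular `|K'(z)| ≥ |z|/2` there. -/
theorem stmt_14 {Ω : Type*} [MeasurableSpace Ω] {P : Measure Ω} [IsProbabilityMeasure P]
    (X : Ω → ℝ) (hmeas : Measurable X) (α : ℝ) (hα : 0 < α)
    (hmean : ∫ ω, X ω ∂P = 0) (hvar : ∫ ω, (X ω) ^ 2 ∂P = 1)
    (hexp : ∫⁻ ω, ENNReal.ofReal (Real.exp (α * |X ω|)) ∂P ≤ 2)
    (K : ℂ → ℂ)
    (hK : ∀ z : ℂ, K z = Complex.log (∫ ω, Complex.exp (z * X ω) ∂P)) :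
    (∀ z₁ z₂ : ℂ, ‖z₁‖ ≤ α ^ 3 / 16 → ‖z₂‖ ≤ α ^ 3 / 16 →
      ‖z₂ - z₁‖ / 2 ≤ ‖deriv K z₂ - deriv K z₁‖) ∧
    (∀ z : ℂ, ‖z‖ ≤ α ^ 3 / 16 → ‖z‖ / 2 ≤ ‖deriv K z‖) := by
  have hα' : α ≠ 0 := ne_of_gt hα
  -- basic objects
  set g : Ω → ℝ := fun ω => Real.exp (α * |X ω|) with hg_def
  have hgm : Measurable g := Real.measurable_exp.comp (hmeas.abs.const_mul α)
  have hg_nn : ∀ ω, 0 ≤ g ω := fun ω => (Real.exp_pos _).le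
  have hg_int : Integrable g P := by
    refine ⟨hgm.aestronglyMeasurable, ?_⟩
    rw [hasFiniteIntegral_iff_ofReal (ae_of_all _ hg_nn)]
    exact lt_of_le_of_lt hexp (by norm_num)
  have hg2 : ∫ ω, g ω ∂P ≤ 2 := by
    rw [integral_eq_lintegral_of_nonneg_ae (ae_of_all _ hg_nn) hgm.aestronglyMeasurable]
    calc (∫⁻ ω, ENNReal.ofReal (g ω) ∂P).toReal ≤ (2:ENNReal).toReal :=
          ENNReal.toReal_mono (by norm_num) hexp
      _ = 2 := by norm_num
  have hXsq_bound : ∀ ω, |X ω|^2 ≤ 16/α^2 * g ω := by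
    intro ω
    have h1 := sp14_mom2c α |X ω| hα (abs_nonneg _)
    have h2 : (1:ℝ) ≤ Real.exp (α*|X ω|/2) := Real.one_le_exp (by positivity)
    nlinarith [sq_nonneg (|X ω|)]
  have hXsq_int : Integrable (fun ω => (X ω)^2) P := by
    refine (hg_int.const_mul (16/α^2)).mono' ((hmeas.pow_const 2).aestronglyMeasurable) ?_
    refine ae_of_all _ fun ω => ?_
    rw [Real.norm_eq_abs, abs_of_nonneg (sq_nonneg _), ← sq_abs]
    exact hXsq_bound ω
  -- α² ≤ 2
  have halpha : α^2 ≤ 2 := by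
    have key : ∀ ω, 1 + α^2/2 * (X ω)^2 ≤ g ω := by
      intro ω
      have h := Real.quadratic_le_exp_of_nonneg (x := α * |X ω|) (by positivity)
      have h2 : (α*|X ω|)^2 = α^2 * (X ω)^2 := by rw [mul_pow, sq_abs]
      nlinarith [abs_nonneg (X ω), hα.le]
    have hle : ∫ ω, (1 + α^2/2 * (X ω)^2) ∂P ≤ ∫ ω, g ω ∂P :=
      integral_mono ((integrable_const 1).add (hXsq_int.const_mul _)) hg_int key
    rw [integral_add (integrable_const 1) (hXsq_int.const_mul _), integral_const,
      integral_const_mul, hvar] at hle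
    simp only [probReal_univ, ENNReal.toReal_one, smul_eq_mul, mul_one] at hle
    linarith
  have halpha32 : α ≤ 3/2 := by nlinarith
  set r : ℝ := α^3/16 with hr_def
  have hrα8 : r ≤ α/8 := by rw [hr_def]; nlinarith
  have hr316 : r ≤ 3/16 := by rw [hr_def]; nlinarith
  have hr_nonneg : 0 ≤ r := by rw [hr_def]; positivity
  -- complex integrand helpers
  have hXc : Measurable fun ω => (X ω : ℂ) := Complex.measurable_ofReal.comp hmeas
  have hnorm_exp : ∀ (z : ℂ) (x : ℝ), ‖Complex.exp (z * x)‖ ≤ Real.exp (‖z‖ * |x|) := by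
    intro z x
    refine sp14_norm_exp_le _ (le_of_eq ?_)
    rw [norm_mul, Complex.norm_real, Real.norm_eq_abs]
  have hexp8 : ∀ (z : ℂ) (ω : Ω), ‖z‖ ≤ α/8 →
      ‖Complex.exp (z * X ω)‖ ≤ Real.exp (α * |X ω| / 8) := by
    intro z ω hz
    refine (hnorm_exp z (X ω)).trans (Real.exp_le_exp.2 ?_)
    calc ‖z‖ * |X ω| ≤ α/8 * |X ω| := mul_le_mul_of_nonneg_right hz (abs_nonneg _)
      _ = α * |X ω| / 8 := by ring
  have hexp2 : ∀ (z : ℂ) (ω : Ω), ‖z‖ ≤ α/2 →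
      ‖Complex.exp (z * X ω)‖ ≤ Real.exp (α * |X ω| / 2) := by
    intro z ω hz
    refine (hnorm_exp z (X ω)).trans (Real.exp_le_exp.2 ?_)
    calc ‖z‖ * |X ω| ≤ α/2 * |X ω| := mul_le_mul_of_nonneg_right hz (abs_nonneg _)
      _ = α * |X ω| / 2 := by ring
  have hXabs_bound : ∀ ω, |X ω| ≤ 1/α * g ω := by
    intro ω
    have := Real.add_one_le_exp (α * |X ω|)
    rw [div_mul_eq_mul_div, le_div_iff₀ hα]
    nlinarith [hg_nn ω]
  have hXc_int : Integrable (fun ω => (X ω : ℂ)) P := by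
    refine (hg_int.const_mul (1/α)).mono' hXc.aestronglyMeasurable (ae_of_all _ fun ω => ?_)
    rw [Complex.norm_real, Real.norm_eq_abs]
    exact hXabs_bound ω
  have hXc2_int : Integrable (fun ω => ((X ω : ℂ))^2) P := by
    refine (hg_int.const_mul (16/α^2)).mono' ((hXc.pow_const 2).aestronglyMeasurable)
      (ae_of_all _ fun ω => ?_)
    rw [norm_pow, Complex.norm_real, Real.norm_eq_abs]
    exact hXsq_bound ω
  have hIexp : ∀ z : ℂ, ‖z‖ ≤ α → Integrable (fun ω => Complex.exp (z * X ω)) P := by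
    intro z hz
    refine (hg_int.const_mul 1).mono'
      ((Complex.measurable_exp.comp (measurable_const.mul hXc)).aestronglyMeasurable)
      (ae_of_all _ fun ω => ?_)
    rw [one_mul]
    refine (hnorm_exp z (X ω)).trans (Real.exp_le_exp.2 ?_)
    exact mul_le_mul_of_nonneg_right hz (abs_nonneg _)
  have hI1 : ∀ z : ℂ, ‖z‖ ≤ α/2 → Integrable (fun ω => (X ω:ℂ) * Complex.exp (z * X ω)) P := by
    intro z hz
    refine (hg_int.const_mul (2/α)).mono'
      ((hXc.mul (Complex.measurable_exp.comp (measurable_const.mul hXc))).aestronglyMeasurable)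
      (ae_of_all _ fun ω => ?_)
    rw [norm_mul, Complex.norm_real, Real.norm_eq_abs]
    calc |X ω| * ‖Complex.exp (z * X ω)‖ ≤ |X ω| * Real.exp (α * |X ω| / 2) :=
          mul_le_mul_of_nonneg_left (hexp2 z ω hz) (abs_nonneg _)
      _ ≤ 2/α * g ω := sp14_mom1c α |X ω| hα (abs_nonneg _)
  have hI2 : ∀ z : ℂ, ‖z‖ ≤ α/2 →
      Integrable (fun ω => ((X ω:ℂ))^2 * Complex.exp (z * X ω)) P := by
    intro z hz
    refine (hg_int.const_mul (16/α^2)).mono'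
      (((hXc.pow_const 2).mul
        (Complex.measurable_exp.comp (measurable_const.mul hXc))).aestronglyMeasurable)
      (ae_of_all _ fun ω => ?_)
    rw [norm_mul, norm_pow, Complex.norm_real, Real.norm_eq_abs]
    calc |X ω|^2 * ‖Complex.exp (z * X ω)‖ ≤ |X ω|^2 * Real.exp (α * |X ω| / 2) :=
          mul_le_mul_of_nonneg_left (hexp2 z ω hz) (by positivity)
      _ ≤ 16/α^2 * g ω := sp14_mom2c α |X ω| hα (abs_nonneg _)
  -- the moment generating function and its derivatives
  set M : ℂ → ℂ := fun z => ∫ ω, Complex.exp (z * X ω) ∂P with hM_def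
  set M₁ : ℂ → ℂ := fun z => ∫ ω, (X ω:ℂ) * Complex.exp (z * X ω) ∂P with hM₁_def
  set M₂ : ℂ → ℂ := fun z => ∫ ω, ((X ω:ℂ))^2 * Complex.exp (z * X ω) ∂P with hM₂_def
  have hα4 : (0:ℝ) < α/4 := by linarith
  have hball : ∀ (z₀ z : ℂ), ‖z₀‖ ≤ α/4 → z ∈ Metric.ball z₀ (α/4) → ‖z‖ ≤ α/2 := by
    intro z₀ z hz₀ hz
    have h1 : ‖z - z₀‖ < α/4 := mem_ball_iff_norm.1 hz
    have h2 : ‖z‖ ≤ ‖z₀‖ + ‖z - z₀‖ := by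
      simpa using norm_add_le z₀ (z - z₀)
    linarith
  have hM : ∀ z₀ : ℂ, ‖z₀‖ ≤ α/4 → HasDerivAt M (M₁ z₀) z₀ := by
    intro z₀ hz₀
    have key := hasDerivAt_integral_of_dominated_loc_of_deriv_le (μ := P) (𝕜 := ℂ)
      (F := fun z ω => Complex.exp (z * X ω))
      (F' := fun z ω => (X ω:ℂ) * Complex.exp (z * X ω)) (x₀ := z₀)
      (s := Metric.ball z₀ (α/4)) (bound := fun ω => 2/α * g ω) (Metric.ball_mem_nhds z₀ hα4)
      (Filter.Eventually.of_forall fun z =>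
        (Complex.measurable_exp.comp (measurable_const.mul hXc)).aestronglyMeasurable)
      (hIexp z₀ (by linarith))
      ((hXc.mul (Complex.measurable_exp.comp (measurable_const.mul hXc))).aestronglyMeasurable)
      (ae_of_all _ fun ω z hz => ?_) (hg_int.const_mul _)
      (ae_of_all _ fun ω z hz => ?_)
    · exact key.2
    · rw [norm_mul, Complex.norm_real, Real.norm_eq_abs]
      calc |X ω| * ‖Complex.exp (z * X ω)‖ ≤ |X ω| * Real.exp (α * |X ω| / 2) :=
            mul_le_mul_of_nonneg_left (hexp2 z ω (hball z₀ z hz₀ hz)) (abs_nonneg _)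
        _ ≤ 2/α * g ω := sp14_mom1c α |X ω| hα (abs_nonneg _)
    · have h := ((hasDerivAt_id' (x := z)).mul_const ((X ω:ℂ))).cexp
      exact h.congr_deriv (by ring)
  have hM₁' : ∀ z₀ : ℂ, ‖z₀‖ ≤ α/4 → HasDerivAt M₁ (M₂ z₀) z₀ := by
    intro z₀ hz₀
    have key := hasDerivAt_integral_of_dominated_loc_of_deriv_le (μ := P) (𝕜 := ℂ)
      (F := fun z ω => (X ω:ℂ) * Complex.exp (z * X ω))
      (F' := fun z ω => ((X ω:ℂ))^2 * Complex.exp (z * X ω)) (x₀ := z₀)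
      (s := Metric.ball z₀ (α/4)) (bound := fun ω => 16/α^2 * g ω) (Metric.ball_mem_nhds z₀ hα4)
      (Filter.Eventually.of_forall fun z =>
        (hXc.mul (Complex.measurable_exp.comp (measurable_const.mul hXc))).aestronglyMeasurable)
      (hI1 z₀ (by linarith))
      (((hXc.pow_const 2).mul
        (Complex.measurable_exp.comp (measurable_const.mul hXc))).aestronglyMeasurable)
      (ae_of_all _ fun ω z hz => ?_) (hg_int.const_mul _)
      (ae_of_all _ fun ω z hz => ?_)
    · exact key.2
    · rw [norm_mul, norm_pow, Complex.norm_real, Real.norm_eq_abs]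
      calc |X ω|^2 * ‖Complex.exp (z * X ω)‖ ≤ |X ω|^2 * Real.exp (α * |X ω| / 2) :=
            mul_le_mul_of_nonneg_left (hexp2 z ω (hball z₀ z hz₀ hz)) (by positivity)
        _ ≤ 16/α^2 * g ω := sp14_mom2c α |X ω| hα (abs_nonneg _)
    · have h := (((hasDerivAt_id' (x := z)).mul_const ((X ω:ℂ))).cexp).const_mul ((X ω:ℂ))
      exact h.congr_deriv (by ring)
  -- values at 0
  have hXc_mean : (∫ ω, (X ω:ℂ) ∂P) = 0 := by
    rw [show (∫ ω, ((X ω):ℂ) ∂P) = ((∫ ω, X ω ∂P : ℝ) : ℂ) from integral_ofReal, hmean]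
    simp
  have hXc2_mean : (∫ ω, ((X ω:ℂ))^2 ∂P) = 1 := by
    have h : (fun ω => ((X ω:ℂ))^2) = fun ω => (((X ω)^2 : ℝ) : ℂ) := by
      funext ω; push_cast; ring
    rw [h, show (∫ ω, (((X ω)^2 : ℝ):ℂ) ∂P) = ((∫ ω, (X ω)^2 ∂P : ℝ) : ℂ) from integral_ofReal, hvar]
    simp
  have hM0 : M 0 = 1 := by
    have h0 : (fun ω => Complex.exp ((0:ℂ) * X ω)) = fun _ => (1:ℂ) := by
      funext ω; rw [zero_mul, Complex.exp_zero]
    show (∫ ω, Complex.exp ((0:ℂ) * X ω) ∂P) = 1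
    rw [h0, integral_const, probReal_univ]
    simp
  have hM₁0 : M₁ 0 = 0 := by
    have h0 : (fun ω => (X ω:ℂ) * Complex.exp ((0:ℂ) * X ω)) = fun ω => (X ω:ℂ) := by
      funext ω; rw [zero_mul, Complex.exp_zero, mul_one]
    show (∫ ω, (X ω:ℂ) * Complex.exp ((0:ℂ) * X ω) ∂P) = 0
    rw [h0]
    exact hXc_mean
  -- integral norm helper
  have norm_int_le : ∀ (f : Ω → ℂ) (c : ℝ), 0 ≤ c → AEStronglyMeasurable f P →
      (∀ ω, ‖f ω‖ ≤ c * g ω) → ‖∫ ω, f ω ∂P‖ ≤ 2*c := by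
    intro f c hc hfm hb
    calc ‖∫ ω, f ω ∂P‖ ≤ ∫ ω, c * g ω ∂P :=
          norm_integral_le_of_norm_le (hg_int.const_mul c) (ae_of_all _ hb)
      _ = c * ∫ ω, g ω ∂P := integral_const_mul c _
      _ ≤ c * 2 := mul_le_mul_of_nonneg_left hg2 hc
      _ = 2*c := by ring
  -- delta bounds
  have hδ₀ : ∀ z : ℂ, ‖z‖ ≤ α/8 → ‖M z - 1‖ ≤ 512/(361*α^2) * ‖z‖^2 := by
    intro z hz
    have hIe := hIexp z (by linarith)
    have e1 : ∫ ω, (Complex.exp (z * X ω) - 1 - z * X ω) ∂P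
        = (∫ ω, (Complex.exp (z * X ω) - 1) ∂P) - ∫ ω, z * (X ω:ℂ) ∂P :=
      integral_sub (hIe.sub (integrable_const 1)) (hXc_int.const_mul z)
    have e2 : ∫ ω, (Complex.exp (z * X ω) - 1) ∂P
        = (∫ ω, Complex.exp (z * X ω) ∂P) - ∫ ω, (1:ℂ) ∂P :=
      integral_sub hIe (integrable_const 1)
    have e3 : ∫ ω, (1:ℂ) ∂P = 1 := by rw [integral_const, probReal_univ]; simp
    have e4 : ∫ ω, z * (X ω:ℂ) ∂P = 0 := by rw [integral_const_mul, hXc_mean, mul_zero]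
    have hsplit : M z - 1 = ∫ ω, (Complex.exp (z * X ω) - 1 - z * X ω) ∂P := by
      rw [e1, e2, e3, e4, sub_zero]
    rw [hsplit]
    have hb := norm_int_le (fun ω => Complex.exp (z * X ω) - 1 - z * X ω)
      (‖z‖^2 * (256/(361*α^2))) (by positivity)
      ((((Complex.measurable_exp.comp (measurable_const.mul hXc)).sub measurable_const).sub
        (measurable_const.mul hXc)).aestronglyMeasurable) ?_
    · calc ‖∫ ω, (Complex.exp (z * X ω) - 1 - z * X ω) ∂P‖
          ≤ 2 * (‖z‖^2 * (256/(361*α^2))) := hb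
        _ = 512/(361*α^2) * ‖z‖^2 := by ring
    · intro ω
      have hw : ‖z * (X ω:ℂ)‖ = ‖z‖ * |X ω| := by
        rw [norm_mul, Complex.norm_real, Real.norm_eq_abs]
      have hwle : ‖z * (X ω:ℂ)‖ ≤ α * |X ω| / 8 := by
        rw [hw]
        calc ‖z‖ * |X ω| ≤ α/8 * |X ω| := mul_le_mul_of_nonneg_right hz (abs_nonneg _)
          _ = α * |X ω| / 8 := by ring
      calc ‖Complex.exp (z * X ω) - 1 - z * X ω‖
          ≤ ‖z * (X ω:ℂ)‖^2 * Real.exp ‖z * (X ω:ℂ)‖ := sp14_exp_taylor2 _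
        _ ≤ ‖z * (X ω:ℂ)‖^2 * Real.exp (α * |X ω| / 8) :=
            mul_le_mul_of_nonneg_left (Real.exp_le_exp.2 hwle) (by positivity)
        _ = ‖z‖^2 * (|X ω|^2 * Real.exp (α * |X ω| / 8)) := by rw [hw]; ring
        _ ≤ ‖z‖^2 * (256/(361*α^2) * Real.exp (α * |X ω|)) :=
            mul_le_mul_of_nonneg_left (sp14_mom2 α |X ω| hα (abs_nonneg _)) (by positivity)
        _ = ‖z‖^2 * (256/(361*α^2)) * g ω := by rw [hg_def]; ring
  have hδ₁ : ∀ z : ℂ, ‖z‖ ≤ α/8 → ‖M₁ z - z‖ ≤ 27648/(6859*α^3) * ‖z‖^2 := by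
    intro z hz
    have hIe := hI1 z (by linarith)
    have heqI : ∫ ω, ((X ω:ℂ) * (Complex.exp (z * X ω) - 1 - z * X ω)) ∂P
        = ∫ ω, ((X ω:ℂ) * Complex.exp (z * X ω) - (X ω:ℂ) - z * ((X ω:ℂ))^2) ∂P := by
      congr 1; funext ω; ring
    have e1 : ∫ ω, ((X ω:ℂ) * Complex.exp (z * X ω) - (X ω:ℂ) - z * ((X ω:ℂ))^2) ∂P
        = (∫ ω, ((X ω:ℂ) * Complex.exp (z * X ω) - (X ω:ℂ)) ∂P) - ∫ ω, z * ((X ω:ℂ))^2 ∂P :=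
      integral_sub (hIe.sub hXc_int) (hXc2_int.const_mul z)
    have e2 : ∫ ω, ((X ω:ℂ) * Complex.exp (z * X ω) - (X ω:ℂ)) ∂P
        = (∫ ω, (X ω:ℂ) * Complex.exp (z * X ω) ∂P) - ∫ ω, (X ω:ℂ) ∂P :=
      integral_sub hIe hXc_int
    have e4 : ∫ ω, z * ((X ω:ℂ))^2 ∂P = z := by
      rw [integral_const_mul, hXc2_mean, mul_one]
    have hsplit : M₁ z - z = ∫ ω, ((X ω:ℂ) * (Complex.exp (z * X ω) - 1 - z * X ω)) ∂P := by
      rw [heqI, e1, e2, hXc_mean, sub_zero, e4]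
    rw [hsplit]
    have hb := norm_int_le (fun ω => (X ω:ℂ) * (Complex.exp (z * X ω) - 1 - z * X ω))
      (‖z‖^2 * (13824/(6859*α^3))) (by positivity)
      ((hXc.mul (((Complex.measurable_exp.comp (measurable_const.mul hXc)).sub
        measurable_const).sub (measurable_const.mul hXc))).aestronglyMeasurable) ?_
    · calc ‖∫ ω, ((X ω:ℂ) * (Complex.exp (z * X ω) - 1 - z * X ω)) ∂P‖
          ≤ 2 * (‖z‖^2 * (13824/(6859*α^3))) := hb
        _ = 27648/(6859*α^3) * ‖z‖^2 := by ring
    · intro ω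
      have hw : ‖z * (X ω:ℂ)‖ = ‖z‖ * |X ω| := by
        rw [norm_mul, Complex.norm_real, Real.norm_eq_abs]
      have hwle : ‖z * (X ω:ℂ)‖ ≤ α * |X ω| / 8 := by
        rw [hw]
        calc ‖z‖ * |X ω| ≤ α/8 * |X ω| := mul_le_mul_of_nonneg_right hz (abs_nonneg _)
          _ = α * |X ω| / 8 := by ring
      rw [norm_mul, Complex.norm_real, Real.norm_eq_abs]
      calc |X ω| * ‖Complex.exp (z * X ω) - 1 - z * X ω‖
          ≤ |X ω| * (‖z * (X ω:ℂ)‖^2 * Real.exp ‖z * (X ω:ℂ)‖) :=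
            mul_le_mul_of_nonneg_left (sp14_exp_taylor2 _) (abs_nonneg _)
        _ ≤ |X ω| * (‖z * (X ω:ℂ)‖^2 * Real.exp (α * |X ω| / 8)) := by
            refine mul_le_mul_of_nonneg_left ?_ (abs_nonneg _)
            exact mul_le_mul_of_nonneg_left (Real.exp_le_exp.2 hwle) (by positivity)
        _ = ‖z‖^2 * (|X ω|^3 * Real.exp (α * |X ω| / 8)) := by rw [hw]; ring
        _ ≤ ‖z‖^2 * (13824/(6859*α^3) * Real.exp (α * |X ω|)) :=
            mul_le_mul_of_nonneg_left (sp14_mom3 α |X ω| hα (abs_nonneg _)) (by positivity)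
        _ = ‖z‖^2 * (13824/(6859*α^3)) * g ω := by rw [hg_def]; ring
  have hδ₂ : ∀ z : ℂ, ‖z‖ ≤ α/8 → ‖M₂ z - 1‖ ≤ 27648/(6859*α^3) * ‖z‖ := by
    intro z hz
    have hIe := hI2 z (by linarith)
    have heqI : ∫ ω, (((X ω:ℂ))^2 * (Complex.exp (z * X ω) - 1)) ∂P
        = ∫ ω, (((X ω:ℂ))^2 * Complex.exp (z * X ω) - ((X ω:ℂ))^2) ∂P := by
      congr 1; funext ω; ring
    have e1 : ∫ ω, (((X ω:ℂ))^2 * Complex.exp (z * X ω) - ((X ω:ℂ))^2) ∂P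
        = (∫ ω, ((X ω:ℂ))^2 * Complex.exp (z * X ω) ∂P) - ∫ ω, ((X ω:ℂ))^2 ∂P :=
      integral_sub hIe hXc2_int
    have hsplit : M₂ z - 1 = ∫ ω, (((X ω:ℂ))^2 * (Complex.exp (z * X ω) - 1)) ∂P := by
      rw [heqI, e1, hXc2_mean]
    rw [hsplit]
    have hb := norm_int_le (fun ω => ((X ω:ℂ))^2 * (Complex.exp (z * X ω) - 1))
      (‖z‖ * (13824/(6859*α^3))) (by positivity)
      (((hXc.pow_const 2).mul ((Complex.measurable_exp.comp
        (measurable_const.mul hXc)).sub measurable_const)).aestronglyMeasurable) ?_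
    · calc ‖∫ ω, (((X ω:ℂ))^2 * (Complex.exp (z * X ω) - 1)) ∂P‖
          ≤ 2 * (‖z‖ * (13824/(6859*α^3))) := hb
        _ = 27648/(6859*α^3) * ‖z‖ := by ring
    · intro ω
      have hw : ‖z * (X ω:ℂ)‖ = ‖z‖ * |X ω| := by
        rw [norm_mul, Complex.norm_real, Real.norm_eq_abs]
      have hwle : ‖z * (X ω:ℂ)‖ ≤ α * |X ω| / 8 := by
        rw [hw]
        calc ‖z‖ * |X ω| ≤ α/8 * |X ω| := mul_le_mul_of_nonneg_right hz (abs_nonneg _)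
          _ = α * |X ω| / 8 := by ring
      rw [norm_mul, norm_pow, Complex.norm_real, Real.norm_eq_abs]
      calc |X ω|^2 * ‖Complex.exp (z * X ω) - 1‖
          ≤ |X ω|^2 * (‖z * (X ω:ℂ)‖ * Real.exp ‖z * (X ω:ℂ)‖) :=
            mul_le_mul_of_nonneg_left (sp14_exp_taylor1 _) (by positivity)
        _ ≤ |X ω|^2 * (‖z * (X ω:ℂ)‖ * Real.exp (α * |X ω| / 8)) := by
            refine mul_le_mul_of_nonneg_left ?_ (by positivity)
            exact mul_le_mul_of_nonneg_left (Real.exp_le_exp.2 hwle) (norm_nonneg _)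
        _ = ‖z‖ * (|X ω|^3 * Real.exp (α * |X ω| / 8)) := by rw [hw]; ring
        _ ≤ ‖z‖ * (13824/(6859*α^3) * Real.exp (α * |X ω|)) :=
            mul_le_mul_of_nonneg_left (sp14_mom3 α |X ω| hα (abs_nonneg _)) (norm_nonneg _)
        _ = ‖z‖ * (13824/(6859*α^3)) * g ω := by rw [hg_def]; ring
  -- numeric consequences on the small disc
  have hd0r : ∀ z : ℂ, ‖z‖ ≤ r → ‖M z - 1‖ ≤ 9/361 := by
    intro z hz
    have hz8 : ‖z‖ ≤ α/8 := hz.trans hrα8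
    have hzr : ‖z‖ ≤ α^3/16 := hz
    calc ‖M z - 1‖ ≤ 512/(361*α^2) * ‖z‖^2 := hδ₀ z hz8
      _ ≤ 512/(361*α^2) * ((α^3/16) * (3/16)) := by
          refine mul_le_mul_of_nonneg_left ?_ (by positivity)
          rw [sq]
          exact mul_le_mul hzr (hz.trans hr316) (norm_nonneg _) (by positivity)
      _ = 6*α/361 := by field_simp; ring
      _ ≤ 9/361 := by linarith
  have hd1r : ∀ z : ℂ, ‖z‖ ≤ r → ‖M₁ z - z‖ ≤ 324/6859 := by
    intro z hz
    have hz8 : ‖z‖ ≤ α/8 := hz.trans hrα8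
    have hzr : ‖z‖ ≤ α^3/16 := hz
    calc ‖M₁ z - z‖ ≤ 27648/(6859*α^3) * ‖z‖^2 := hδ₁ z hz8
      _ ≤ 27648/(6859*α^3) * ((α^3/16) * (3/16)) := by
          refine mul_le_mul_of_nonneg_left ?_ (by positivity)
          rw [sq]
          exact mul_le_mul hzr (hz.trans hr316) (norm_nonneg _) (by positivity)
      _ = 324/6859 := by field_simp; ring
  have hd2r : ∀ z : ℂ, ‖z‖ ≤ r → ‖M₂ z - 1‖ ≤ 1728/6859 := by
    intro z hz
    have hz8 : ‖z‖ ≤ α/8 := hz.trans hrα8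
    have hzr : ‖z‖ ≤ α^3/16 := hz
    calc ‖M₂ z - 1‖ ≤ 27648/(6859*α^3) * ‖z‖ := hδ₂ z hz8
      _ ≤ 27648/(6859*α^3) * (α^3/16) :=
          mul_le_mul_of_nonneg_left hzr (by positivity)
      _ = 1728/6859 := by field_simp; ring
  have hm_lb : ∀ z : ℂ, ‖z‖ ≤ r → (352:ℝ)/361 ≤ ‖M z‖ := by
    intro z hz
    have h0 : M z - (M z - 1) = 1 := by ring
    have h1 := norm_sub_le (M z) (M z - 1)
    rw [h0, norm_one] at h1
    linarith [hd0r z hz]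
  have hm_ub : ∀ z : ℂ, ‖z‖ ≤ r → ‖M z‖ ≤ (370:ℝ)/361 := by
    intro z hz
    have h0 : M z = (M z - 1) + 1 := by ring
    have h1 : ‖M z‖ ≤ ‖M z - 1‖ + ‖(1:ℂ)‖ := by
      calc ‖M z‖ = ‖(M z - 1) + 1‖ := by rw [sub_add_cancel]
        _ ≤ ‖M z - 1‖ + ‖(1:ℂ)‖ := norm_add_le _ _
    rw [norm_one] at h1
    linarith [hd0r z hz]
  have hMne : ∀ z : ℂ, ‖z‖ ≤ r → M z ≠ 0 := by
    intro z hz h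
    have hlb := hm_lb z hz
    rw [h, norm_zero] at hlb
    linarith
  -- bound on the derivative of z ↦ M₁ z / M z − z
  have hDbound : ∀ z : ℂ, ‖z‖ ≤ r →
      ‖(M₂ z * M z - M₁ z * M₁ z)/(M z)^2 - 1‖ ≤ 1/2 := by
    intro z hz
    have hne := hMne z hz
    have hd0 := hd0r z hz
    have hd1 := hd1r z hz
    have hd2 := hd2r z hz
    have hub := hm_ub z hz
    have hlb := hm_lb z hz
    have hzr : ‖z‖ ≤ 3/16 := hz.trans hr316
    have hid : (M₂ z * M z - M₁ z * M₁ z)/(M z)^2 - 1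
        = (M₂ z * M z - M₁ z * M₁ z - (M z)^2) / (M z)^2 := by
      field_simp
    rw [hid]
    have hNid : M₂ z * M z - M₁ z * M₁ z - (M z)^2
        = (M₂ z - 1)*(M z) - (M z)*(M z - 1) - z^2 - 2*z*(M₁ z - z) - (M₁ z - z)^2 := by
      ring
    have t1 : ‖(M₂ z - 1)*(M z)‖ ≤ 1728/6859*(370/361) := by
      rw [norm_mul]
      exact mul_le_mul hd2 hub (norm_nonneg _) (by norm_num)
    have t2 : ‖(M z)*(M z - 1)‖ ≤ 370/361*(9/361) := by
      rw [norm_mul]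
      exact mul_le_mul hub hd0 (norm_nonneg _) (by norm_num)
    have t3 : ‖z^2‖ ≤ ((3:ℝ)/16)^2 := by
      rw [norm_pow]
      exact pow_le_pow_left₀ (norm_nonneg _) hzr 2
    have t4 : ‖2*z*(M₁ z - z)‖ ≤ 2*(3/16)*(324/6859) := by
      rw [norm_mul, norm_mul]
      have h2 : ‖(2:ℂ)‖ = 2 := by norm_num
      rw [h2]
      nlinarith [norm_nonneg z, norm_nonneg (M₁ z - z), mul_le_mul hzr hd1 (norm_nonneg _) (by norm_num : (0:ℝ) ≤ 3/16)]
    have t5 : ‖(M₁ z - z)^2‖ ≤ ((324:ℝ)/6859)^2 := by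
      rw [norm_pow]
      exact pow_le_pow_left₀ (norm_nonneg _) hd1 2
    have hN : ‖M₂ z * M z - M₁ z * M₁ z - (M z)^2‖
        ≤ 1728/6859*(370/361) + 370/361*(9/361) + (3/16)^2
          + 2*(3/16)*(324/6859) + (324/6859)^2 := by
      rw [hNid]
      have s1 := norm_sub_le ((M₂ z - 1)*(M z) - (M z)*(M z - 1) - z^2 - 2*z*(M₁ z - z))
        ((M₁ z - z)^2)
      have s2 := norm_sub_le ((M₂ z - 1)*(M z) - (M z)*(M z - 1) - z^2) (2*z*(M₁ z - z))
      have s3 := norm_sub_le ((M₂ z - 1)*(M z) - (M z)*(M z - 1)) (z^2)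
      have s4 := norm_sub_le ((M₂ z - 1)*(M z)) ((M z)*(M z - 1))
      linarith
    have hnorm_sq : ((352:ℝ)/361)^2 ≤ ‖(M z)^2‖ := by
      rw [norm_pow]
      exact pow_le_pow_left₀ (by norm_num) hlb 2
    have hpos : (0:ℝ) < ‖(M z)^2‖ := by
      have : (0:ℝ) < ((352:ℝ)/361)^2 := by norm_num
      linarith
    rw [norm_div, div_le_iff₀ hpos]
    have hnum : 1728/6859*(370/361) + 370/361*(9/361) + ((3:ℝ)/16)^2
          + 2*(3/16)*(324/6859) + (324/6859)^2 ≤ 1/2 * ((352:ℝ)/361)^2 := by norm_num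
    nlinarith
  -- K has derivative M₁/M
  have hKeq : K = fun z => Complex.log (M z) := funext fun z => hK z
  have hKd : ∀ z : ℂ, ‖z‖ ≤ r → HasDerivAt K (M₁ z / M z) z := by
    intro z hz
    have h4 : ‖z‖ ≤ α/4 := (hz.trans hrα8).trans (by linarith)
    have hm := hM z h4
    have hslit : M z ∈ Complex.slitPlane := by
      have hd0 := hd0r z hz
      have hre : |((M z) - 1).re| ≤ ‖M z - 1‖ := Complex.abs_re_le_norm _
      have hre2 : (M z).re = ((M z) - 1).re + 1 := by
        rw [Complex.sub_re, Complex.one_re]; ring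
      rw [Complex.mem_slitPlane_iff]
      left
      rw [hre2]
      have := abs_le.1 hre
      linarith
    rw [hKeq]
    exact hm.clog hslit
  have hKderiv : ∀ z : ℂ, ‖z‖ ≤ r → deriv K z = M₁ z / M z := fun z hz => (hKd z hz).deriv
  -- mean value inequality
  have key : ∀ z₁ z₂ : ℂ, ‖z₁‖ ≤ r → ‖z₂‖ ≤ r →
      ‖(M₁ z₂/M z₂ - z₂) - (M₁ z₁/M z₁ - z₁)‖ ≤ 1/2 * ‖z₂ - z₁‖ := by
    intro z₁ z₂ h1 h2
    refine Convex.norm_image_sub_le_of_norm_hasDerivWithin_le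
      (f := fun z => M₁ z / M z - z)
      (f' := fun z => (M₂ z * M z - M₁ z * M₁ z)/(M z)^2 - 1)
      (s := Metric.closedBall 0 r) ?_ ?_ (convex_closedBall _ _) ?_ ?_
    · intro x hx
      have hxr : ‖x‖ ≤ r := by simpa [Metric.mem_closedBall, dist_zero_right] using hx
      have h4 : ‖x‖ ≤ α/4 := (hxr.trans hrα8).trans (by linarith)
      exact (((hM₁' x h4).div (hM x h4) (hMne x hxr)).sub (hasDerivAt_id x)).hasDerivWithinAt
    · intro x hx
      exact hDbound x (by simpa [Metric.mem_closedBall, dist_zero_right] using hx)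
    · simpa [Metric.mem_closedBall, dist_zero_right] using h1
    · simpa [Metric.mem_closedBall, dist_zero_right] using h2
  have main : ∀ z₁ z₂ : ℂ, ‖z₁‖ ≤ α ^ 3 / 16 → ‖z₂‖ ≤ α ^ 3 / 16 →
      ‖z₂ - z₁‖ / 2 ≤ ‖deriv K z₂ - deriv K z₁‖ := by
    intro z₁ z₂ h1 h2
    have h1r : ‖z₁‖ ≤ r := h1
    have h2r : ‖z₂‖ ≤ r := h2
    have hk := key z₁ z₂ h1r h2r
    have e1 := hKderiv z₁ h1r
    have e2 := hKderiv z₂ h2r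
    have hdiff : ‖(deriv K z₂ - deriv K z₁) - (z₂ - z₁)‖ ≤ 1/2 * ‖z₂ - z₁‖ := by
      rw [e1, e2, show (M₁ z₂ / M z₂ - M₁ z₁ / M z₁) - (z₂ - z₁)
        = (M₁ z₂/M z₂ - z₂) - (M₁ z₁/M z₁ - z₁) from by ring]
      exact hk
    have htri : ‖z₂ - z₁‖ - ‖deriv K z₂ - deriv K z₁‖
        ≤ ‖(deriv K z₂ - deriv K z₁) - (z₂ - z₁)‖ := by
      have h := norm_sub_norm_le (z₂ - z₁) (deriv K z₂ - deriv K z₁)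
      have heq : ‖(z₂ - z₁) - (deriv K z₂ - deriv K z₁)‖
          = ‖(deriv K z₂ - deriv K z₁) - (z₂ - z₁)‖ := norm_sub_rev _ _
      linarith
    linarith
  refine ⟨main, fun z hz => ?_⟩
  have h0 : ‖(0:ℂ)‖ ≤ α ^ 3 / 16 := by rw [norm_zero]; positivity
  have hmain := main 0 z h0 hz
  have hd0' : deriv K 0 = M₁ 0 / M 0 := hKderiv 0 (by rw [norm_zero]; exact hr_nonneg)
  rw [hd0', hM₁0, hM0] at hmain
  simpa using hmain
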